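/- Let S be a finite meet-semilattice of subspaces of a finite-dimensional vector space V* closed under sums (dually: an arrangement of linear subspaces closed under sum), and let G ⊆ S. If for every S ∈ S the maximal elements T₁⊥, ..., T_k⊥ of {G⊥ : G ∈ G, G⊥ ⊆ S⊥} form a direct sum with T₁⊥ ⊕ ⋯ ⊕ T_k⊥ = S⊥, then for any 1 ≤ m ≤ k, the subspaces T₁⊥, ..., T_m⊥ are exactly the maximal elements of {G⊥ ∈ G : G⊥ ⊆ T₁⊥ + ⋯ + T_m⊥}. -/
import Mathlib


/-- The maximal elements of `{g ∈ G | g ≤ U}`. -/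
def maximalBelow {K V : Type*} [Field K] [AddCommGroup V] [Module K V]
    (G : Set (Submodule K V)) (U : Submodule K V) : Set (Submodule K V) :=
  {g | g ∈ G ∧ g ≤ U ∧ ∀ g' ∈ G, g' ≤ U → g ≤ g' → g' = g}

/-- Lemma 2.6(i), linear-algebra core: let `S` be a finite family of subspaces
of `V*` closed under sums and `G ⊆ S` a De Concini–Procesi building set, i.e.
for every `U ∈ S` the maximal elements of `G` contained in `U` form a direct
sum equal to `U`.  Then for any nonempty subset `P` of the maximal elements of
`G` below `U`, the maximal elements of `G` below the sum `sSup P` are exactly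
the members of `P`. -/
theorem maximalBelow_of_partial_sum
    (K V : Type*) [Field K] [AddCommGroup V] [Module K V]
    [FiniteDimensional K V]
    (S G : Set (Submodule K V)) (hSfin : S.Finite) (hGS : G ⊆ S)
    (hbot : ∀ U ∈ S, U ≠ ⊥)
    (hsum : ∀ U ∈ S, ∀ U' ∈ S, U ⊔ U' ∈ S)
    (hbuild : ∀ U ∈ S, sSupIndep (maximalBelow G U) ∧ sSup (maximalBelow G U) = U)
    (U : Submodule K V) (hU : U ∈ S)
    (P : Set (Submodule K V)) (hPne : P.Nonempty) (hP : P ⊆ maximalBelow G U) :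
    maximalBelow G (sSup P) = P := by
  have hPS : P ⊆ S := fun x hx => hGS (hP hx).1
  have hWU : sSup P ≤ U := sSup_le fun p hp => (hP hp).2.1
  apply Set.Subset.antisymm
  · intro g hg
    obtain ⟨hgG, hgW, hgmax⟩ := hg
    have hGfin : {g' | g' ∈ G ∧ g' ≤ U}.Finite :=
      hSfin.subset (fun x hx => hGS hx.1)
    obtain ⟨m, hgm, hm⟩ := hGfin.exists_le_maximal ⟨hgG, le_trans hgW hWU⟩
    have hmMax : m ∈ maximalBelow G U :=
      ⟨hm.1.1, hm.1.2, fun g' hg' hg'U hmg' =>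
        le_antisymm (hm.2 ⟨hg', hg'U⟩ hmg') hmg'⟩
    by_cases hmP : m ∈ P
    · have : m = g := hgmax m hm.1.1 (le_sSup hmP) hgm
      rwa [← this]
    · exfalso
      have hdisj := (hbuild U hU).1 hmMax
      have hPsub : P ⊆ maximalBelow G U \ {m} := fun x hx =>
        ⟨hP hx, fun h => hmP (h ▸ hx)⟩
      have hgbot : g ≤ ⊥ := hdisj hgm (le_trans hgW (sSup_le_sSup hPsub))
      exact hbot g (hGS hgG) (le_bot_iff.mp hgbot)
  · intro p hp
    refine ⟨(hP hp).1, le_sSup hp, fun g' hg' hg'W hpg' =>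
      (hP hp).2.2 g' hg' (le_trans hg'W hWU) hpg'⟩
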